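/- Let n ≥ 1 and T > 0. Let u, v : ℝ^n × [0,T] → ℝ be bounded and ℤ^n-periodic in the space variable, with u upper semicontinuous, v lower semicontinuous, and u(x,0) ≤ v(x,0) for all x ∈ ℝ^n. Assume m₀ := sup_{x,t} (u(x,t) − v(x,t)) > 0, and set M := sup_{x,t,y,s} (u(x,t) − v(y,s)), m₀' := (7/8) m₀ and κ(ε) := (1/2)(ε (m₀ − m₀'))^{1/2}. Then there exist positive constants ε₀, σ₀, γ₀ such that for every ε ∈ (0,ε₀), σ ∈ (0,σ₀), γ ∈ (0,γ₀) and every ζ ∈ ℝ^n with ‖ζ‖ ≤ κ(ε): (a) sup Φ_ζ > m₀' (supremum over x,y ∈ ℝ^n, t,s ∈ [0,T)); and (b) every maximizer (x,t,y,s) of Φ_ζ over ℝ^n × [0,T) × ℝ^n × [0,T) satisfies t > 0, s > 0, |t − s| ≤ (2Mσ)^{1/2} and d(x − y − ζ) ≤ (2Mε)^{1/2}. -/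

import Mathlib

noncomputable section

/-- The vector in `ℝⁿ` with integer coordinates `k`. -/
def intVec (n : ℕ) (k : Fin n → ℤ) : EuclideanSpace ℝ (Fin n) :=
  WithLp.toLp 2 (fun i => (k i : ℝ))

/-- Torus distance: `d(x) := inf_{k ∈ ℤⁿ} ‖x + k‖`. -/
def torusDist (n : ℕ) (x : EuclideanSpace ℝ (Fin n)) : ℝ :=
  ⨅ k : Fin n → ℤ, ‖x + intVec n k‖

/-- `S(t,s) := |t-s|²/(2σ) + γ/(T-t) + γ/(T-s)`. -/
def Sfun (T σ γ t s : ℝ) : ℝ :=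
  |t - s| ^ 2 / (2 * σ) + γ / (T - t) + γ / (T - s)

/-- `Φ_ζ(x,t,y,s) := u(x,t) - v(y,s) - d(x-y-ζ)²/(2ε) - S(t,s)`. -/
def Phi (n : ℕ) (u v : EuclideanSpace ℝ (Fin n) × ℝ → ℝ) (T ε σ γ : ℝ)
    (ζ x : EuclideanSpace ℝ (Fin n)) (t : ℝ) (y : EuclideanSpace ℝ (Fin n)) (s : ℝ) : ℝ :=
  u (x, t) - v (y, s) - torusDist n (x - y - ζ) ^ 2 / (2 * ε) - Sfun T σ γ t s


lemma intVec_sub (n : ℕ) (a b : Fin n → ℤ) : intVec n a - intVec n b = intVec n (a - b) := by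
  ext i
  show (a i : ℝ) - (b i : ℝ) = ((a i - b i : ℤ) : ℝ)
  push_cast; ring

lemma torusDist_bddBelow (n : ℕ) (x : EuclideanSpace ℝ (Fin n)) :
    BddBelow (Set.range fun k : Fin n → ℤ => ‖x + intVec n k‖) :=
  ⟨0, by rintro _ ⟨k, rfl⟩; exact norm_nonneg _⟩

lemma torusDist_nonneg (n : ℕ) (x : EuclideanSpace ℝ (Fin n)) : 0 ≤ torusDist n x :=
  le_ciInf fun k => norm_nonneg _

lemma torusDist_le (n : ℕ) (x : EuclideanSpace ℝ (Fin n)) (k : Fin n → ℤ) :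
    torusDist n x ≤ ‖x + intVec n k‖ :=
  ciInf_le (torusDist_bddBelow n x) k

lemma torusDist_le_norm (n : ℕ) (x : EuclideanSpace ℝ (Fin n)) : torusDist n x ≤ ‖x‖ := by
  have h := torusDist_le n x 0
  have : intVec n 0 = 0 := by ext i; show ((0:ℤ):ℝ) = 0; norm_num
  rwa [this, add_zero] at h

lemma torusDist_add_le (n : ℕ) (a b : EuclideanSpace ℝ (Fin n)) :
    torusDist n (a + b) ≤ torusDist n a + ‖b‖ := by
  rw [← sub_le_iff_le_add]
  refine le_ciInf fun k => ?_
  have h1 : torusDist n (a + b) ≤ ‖a + b + intVec n k‖ := torusDist_le n (a+b) k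
  have h2 : ‖a + b + intVec n k‖ ≤ ‖a + intVec n k‖ + ‖b‖ := by
    have : a + b + intVec n k = (a + intVec n k) + b := by module
    rw [this]; exact norm_add_le _ _
  linarith

lemma exists_intVec_lt (n : ℕ) (x : EuclideanSpace ℝ (Fin n)) {c : ℝ}
    (h : torusDist n x < c) : ∃ k, ‖x + intVec n k‖ < c :=
  exists_lt_of_ciInf_lt h

lemma norm_frac_le (n : ℕ) (x : EuclideanSpace ℝ (Fin n)) :
    ‖x + intVec n (fun i => -⌊x i⌋)‖ ≤ Real.sqrt n := by
  rw [EuclideanSpace.norm_eq]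
  apply Real.sqrt_le_sqrt
  have : ∀ i : Fin n, ‖(x + intVec n fun i => -⌊x i⌋) i‖ ^ 2 ≤ 1 := by
    intro i
    have hxi : (x + intVec n fun i => -⌊x i⌋) i = x i - ⌊x i⌋ := by
      show x i + ((-⌊x i⌋ : ℤ) : ℝ) = _
      push_cast; ring
    rw [hxi, Real.norm_eq_abs, abs_of_nonneg (by linarith [Int.floor_le (x i)])]
    have h1 : x i - ⌊x i⌋ < 1 := by linarith [Int.lt_floor_add_one (x i)]
    nlinarith [Int.floor_le (x i)]
  calc (∑ i, ‖(x + intVec n fun i => -⌊x i⌋) i‖ ^ 2) ≤ ∑ _i : Fin n, (1:ℝ) :=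
        Finset.sum_le_sum fun i _ => this i
    _ = n := by simp

lemma lemA (n : ℕ) (T : ℝ) (hT : 0 < T)
    (u v : EuclideanSpace ℝ (Fin n) × ℝ → ℝ)
    (huper : ∀ (x : EuclideanSpace ℝ (Fin n)) (k : Fin n → ℤ) (t : ℝ),
      u (x + intVec n k, t) = u (x, t))
    (hvper : ∀ (x : EuclideanSpace ℝ (Fin n)) (k : Fin n → ℤ) (t : ℝ),
      v (x + intVec n k, t) = v (x, t))
    (husc : UpperSemicontinuousOn u (Set.univ ×ˢ Set.Icc (0 : ℝ) T))
    (hvsc : LowerSemicontinuousOn v (Set.univ ×ˢ Set.Icc (0 : ℝ) T))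
    (hinit : ∀ x : EuclideanSpace ℝ (Fin n), u (x, 0) ≤ v (x, 0))
    (θ : ℝ) (hθ : 0 < θ) :
    ∃ r : ℝ, 0 < r ∧ r ≤ T ∧ ∀ x y : EuclideanSpace ℝ (Fin n), ∀ t s : ℝ,
      0 ≤ t → t ≤ r → 0 ≤ s → s ≤ r → torusDist n (x - y) ≤ r →
      u (x, t) - v (y, s) < θ := by
  by_contra hcon
  push_neg at hcon
  have hr : ∀ k : ℕ, ∃ x y : EuclideanSpace ℝ (Fin n), ∃ t s : ℝ,
      0 ≤ t ∧ t ≤ min T (1/(k+1)) ∧ 0 ≤ s ∧ s ≤ min T (1/(k+1)) ∧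
      torusDist n (x - y) ≤ min T (1/(k+1)) ∧ θ ≤ u (x, t) - v (y, s) := by
    intro k
    exact hcon (min T (1/(k+1))) (lt_min hT (by positivity)) (min_le_left _ _)
  choose X Y tt ss h1 h2 h3 h4 h5 h6 using hr
  -- choose integer shifts
  have hK : ∀ k : ℕ, ∃ kk : Fin n → ℤ,
      ‖(X k - Y k) + intVec n kk‖ < 2/(k+1) := by
    intro k
    apply exists_intVec_lt
    calc torusDist n (X k - Y k) ≤ min T (1/(k+1)) := h5 k
      _ ≤ 1/(k+1) := min_le_right _ _
      _ < 2/(k+1) := by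
          have : (0:ℝ) < (k:ℝ)+1 := by positivity
          rw [div_lt_div_iff₀ this this]; nlinarith
  choose K hK using hK
  set z : ℕ → EuclideanSpace ℝ (Fin n) := fun k => (X k - Y k) + intVec n (K k) with hz
  set X' : ℕ → EuclideanSpace ℝ (Fin n) := fun k => X k + intVec n (fun i => -⌊X k i⌋) with hX'
  have hXnorm : ∀ k, ‖X' k‖ ≤ Real.sqrt n := fun k => norm_frac_le n (X k)
  have huX : ∀ k t, u (X' k, t) = u (X k, t) := fun k t => huper _ _ _
  have hvY : ∀ k s, v (X' k - z k, s) = v (Y k, s) := by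
    intro k s
    have heq : X' k - z k = Y k + intVec n ((fun i => -⌊X k i⌋) - K k) := by
      rw [← intVec_sub]
      simp only [hX', hz]
      module
    rw [heq, hvper]
  -- compactness
  obtain ⟨xb, hxb, φ, hφ, hconv⟩ :=
    (isCompact_closedBall (0 : EuclideanSpace ℝ (Fin n)) (Real.sqrt n)).tendsto_subseq
      (x := X') (fun k => by simpa [Metric.mem_closedBall, dist_zero_right] using hXnorm k)
  have hone : Filter.Tendsto (fun k : ℕ => 1/((k:ℝ)+1)) Filter.atTop (nhds 0) :=
    tendsto_one_div_add_atTop_nhds_zero_nat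
  have htt : Filter.Tendsto tt Filter.atTop (nhds 0) :=
    squeeze_zero h1 (fun k => le_trans (h2 k) (min_le_right _ _)) hone
  have hss : Filter.Tendsto ss Filter.atTop (nhds 0) :=
    squeeze_zero h3 (fun k => le_trans (h4 k) (min_le_right _ _)) hone
  have hzz : Filter.Tendsto z Filter.atTop (nhds 0) := by
    apply squeeze_zero_norm (fun k => le_of_lt (hK k))
    have : Filter.Tendsto (fun k : ℕ => 2 * (1/((k:ℝ)+1))) Filter.atTop (nhds (2*0)) :=
      hone.const_mul 2
    simpa [mul_one_div, div_eq_mul_inv] using this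
  have hφt : Filter.Tendsto φ Filter.atTop Filter.atTop := hφ.tendsto_atTop
  have hS : ∀ (p : EuclideanSpace ℝ (Fin n)) (t : ℝ), 0 ≤ t → t ≤ T →
      (p, t) ∈ (Set.univ ×ˢ Set.Icc (0 : ℝ) T) := by
    intro p t h0 h1
    exact Set.mk_mem_prod (Set.mem_univ p) ⟨h0, h1⟩
  have hmem0 : ((xb, (0:ℝ)) : EuclideanSpace ℝ (Fin n) × ℝ) ∈ Set.univ ×ˢ Set.Icc (0:ℝ) T :=
    hS xb 0 le_rfl hT.le
  -- sequences into the set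
  have hpt : Filter.Tendsto (fun k => ((X' (φ k), tt (φ k)) : EuclideanSpace ℝ (Fin n) × ℝ))
      Filter.atTop (nhdsWithin (xb, 0) (Set.univ ×ˢ Set.Icc (0:ℝ) T)) := by
    rw [tendsto_nhdsWithin_iff]
    constructor
    · exact hconv.prodMk_nhds (htt.comp hφt)
    · exact Filter.Eventually.of_forall fun k =>
        hS _ _ (h1 _) (le_trans (h2 _) (min_le_left _ _))
  have hqt : Filter.Tendsto (fun k => ((X' (φ k) - z (φ k), ss (φ k)) : EuclideanSpace ℝ (Fin n) × ℝ))
      Filter.atTop (nhdsWithin (xb, 0) (Set.univ ×ˢ Set.Icc (0:ℝ) T)) := by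
    rw [tendsto_nhdsWithin_iff]
    constructor
    · have : Filter.Tendsto (fun k => X' (φ k) - z (φ k)) Filter.atTop (nhds (xb - 0)) :=
        hconv.sub (hzz.comp hφt)
      rw [sub_zero] at this
      exact this.prodMk_nhds (hss.comp hφt)
    · exact Filter.Eventually.of_forall fun k =>
        hS _ _ (h3 _) (le_trans (h4 _) (min_le_left _ _))
  have hu_ev : ∀ᶠ k in Filter.atTop, u (X' (φ k), tt (φ k)) < u (xb, 0) + θ/4 :=
    hpt.eventually (husc (xb, 0) hmem0 (u (xb, 0) + θ/4) (by linarith))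
  have hv_ev : ∀ᶠ k in Filter.atTop, v (xb, 0) - θ/4 < v (X' (φ k) - z (φ k), ss (φ k)) :=
    hqt.eventually (hvsc (xb, 0) hmem0 (v (xb, 0) - θ/4) (by linarith))
  obtain ⟨k, hku, hkv⟩ := (hu_ev.and hv_ev).exists
  have h6k := h6 (φ k)
  rw [← huX (φ k) (tt (φ k)), ← hvY (φ k) (ss (φ k))] at h6k
  have := hinit xb
  linarith


set_option maxHeartbeats 2000000 in
/-- Basic properties of maximizers of `Φ_ζ` for small parameters `ε, σ, γ` and shifts `ζ`. -/
theorem small_constants (n : ℕ) (hn : 1 ≤ n) (T : ℝ) (hT : 0 < T)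
    (u v : EuclideanSpace ℝ (Fin n) × ℝ → ℝ)
    (hub : ∃ C : ℝ, ∀ x : EuclideanSpace ℝ (Fin n), ∀ t ∈ Set.Icc (0 : ℝ) T, |u (x, t)| ≤ C)
    (hvb : ∃ C : ℝ, ∀ x : EuclideanSpace ℝ (Fin n), ∀ t ∈ Set.Icc (0 : ℝ) T, |v (x, t)| ≤ C)
    (huper : ∀ (x : EuclideanSpace ℝ (Fin n)) (k : Fin n → ℤ) (t : ℝ),
      u (x + intVec n k, t) = u (x, t))
    (hvper : ∀ (x : EuclideanSpace ℝ (Fin n)) (k : Fin n → ℤ) (t : ℝ),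
      v (x + intVec n k, t) = v (x, t))
    (husc : UpperSemicontinuousOn u (Set.univ ×ˢ Set.Icc (0 : ℝ) T))
    (hvsc : LowerSemicontinuousOn v (Set.univ ×ˢ Set.Icc (0 : ℝ) T))
    (hinit : ∀ x : EuclideanSpace ℝ (Fin n), u (x, 0) ≤ v (x, 0))
    (m₀ M : ℝ)
    (hm₀ : m₀ = sSup {r : ℝ | ∃ x : EuclideanSpace ℝ (Fin n), ∃ t ∈ Set.Ioo (0 : ℝ) T,
      r = u (x, t) - v (x, t)})
    (hm₀pos : 0 < m₀)
    (hM : M = sSup {r : ℝ | ∃ x y : EuclideanSpace ℝ (Fin n), ∃ t ∈ Set.Icc (0 : ℝ) T,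
      ∃ s ∈ Set.Icc (0 : ℝ) T, r = u (x, t) - v (y, s)}) :
    ∃ ε₀ > (0 : ℝ), ∃ σ₀ > (0 : ℝ), ∃ γ₀ > (0 : ℝ),
      ∀ ε ∈ Set.Ioo 0 ε₀, ∀ σ ∈ Set.Ioo 0 σ₀, ∀ γ ∈ Set.Ioo 0 γ₀,
      ∀ ζ : EuclideanSpace ℝ (Fin n), ‖ζ‖ ≤ Real.sqrt (ε * (m₀ - 7 / 8 * m₀)) / 2 →
        (7 / 8 * m₀ < sSup {r : ℝ | ∃ x y : EuclideanSpace ℝ (Fin n),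
            ∃ t ∈ Set.Ico (0 : ℝ) T, ∃ s ∈ Set.Ico (0 : ℝ) T,
            r = Phi n u v T ε σ γ ζ x t y s}) ∧
        (∀ (x y : EuclideanSpace ℝ (Fin n)), ∀ t ∈ Set.Ico (0 : ℝ) T, ∀ s ∈ Set.Ico (0 : ℝ) T,
          (∀ (x' y' : EuclideanSpace ℝ (Fin n)), ∀ t' ∈ Set.Ico (0 : ℝ) T,
            ∀ s' ∈ Set.Ico (0 : ℝ) T,
            Phi n u v T ε σ γ ζ x' t' y' s' ≤ Phi n u v T ε σ γ ζ x t y s) →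
          0 < t ∧ 0 < s ∧ |t - s| ≤ Real.sqrt (2 * M * σ) ∧
            torusDist n (x - y - ζ) ≤ Real.sqrt (2 * M * ε)) := by
  obtain ⟨Cu, hCu⟩ := hub
  obtain ⟨Cv, hCv⟩ := hvb
  set A : Set ℝ := {r : ℝ | ∃ x : EuclideanSpace ℝ (Fin n), ∃ t ∈ Set.Ioo (0 : ℝ) T,
      r = u (x, t) - v (x, t)} with hA
  set B : Set ℝ := {r : ℝ | ∃ x y : EuclideanSpace ℝ (Fin n), ∃ t ∈ Set.Icc (0 : ℝ) T,
      ∃ s ∈ Set.Icc (0 : ℝ) T, r = u (x, t) - v (y, s)} with hB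
  have hAne : A.Nonempty :=
    ⟨u (0, T/2) - v (0, T/2), 0, T/2, ⟨by linarith, by linarith⟩, rfl⟩
  have hBbdd : BddAbove B := by
    refine ⟨Cu + Cv, ?_⟩
    rintro _ ⟨x, y, t, ht, s, hs, rfl⟩
    have h1 := hCu x t ht
    have h2 := hCv y s hs
    have h1' := abs_le.1 h1
    have h2' := abs_le.1 h2
    linarith [h1'.1, h1'.2, h2'.1, h2'.2]
  have hAsubB : A ⊆ B := by
    rintro _ ⟨x, t, ht, rfl⟩
    exact ⟨x, x, t, ⟨ht.1.le, ht.2.le⟩, t, ⟨ht.1.le, ht.2.le⟩, rfl⟩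
  have hm₀M : m₀ ≤ M := by
    rw [hm₀, hM]; exact csSup_le_csSup hBbdd hAne hAsubB
  have hMpos : 0 < M := lt_of_lt_of_le hm₀pos hm₀M
  -- test point
  have hlt : m₀ - m₀/64 < sSup A := by rw [← hm₀]; linarith
  obtain ⟨_, ⟨xh, th, hth, rfl⟩, hval⟩ := exists_lt_of_lt_csSup hAne hlt
  -- key small-time lemma
  obtain ⟨r, hr0, hrT, hru⟩ := lemA n T hT u v huper hvper husc hvsc hinit (m₀/2)
    (by linarith)
  refine ⟨min (r^2/(8*M)) (8*r^2/m₀), by positivity, r^2/(2*M), by positivity,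
    m₀*(T - th)/64, by
      have : 0 < T - th := sub_pos.2 hth.2
      positivity, ?_⟩
  rintro ε ⟨hε0, hεε⟩ σ ⟨hσ0, hσσ⟩ γ ⟨hγ0, hγγ⟩ ζ hζ
  have hε1 : ε < r^2/(8*M) := lt_of_lt_of_le hεε (min_le_left _ _)
  have hε2 : ε < 8*r^2/m₀ := lt_of_lt_of_le hεε (min_le_right _ _)
  -- bound on ‖ζ‖²
  have hcnn : (0:ℝ) ≤ ε * (m₀ - 7/8*m₀) := by nlinarith
  have hζsq : ‖ζ‖^2 ≤ ε * m₀ / 32 := by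
    have hs := Real.sq_sqrt hcnn
    nlinarith [norm_nonneg ζ, Real.sqrt_nonneg (ε * (m₀ - 7/8*m₀))]
  have hζhalf : ‖ζ‖ ≤ r/2 := by
    have hε2' : ε * m₀ < 8*r^2 := by
      rw [lt_div_iff₀ hm₀pos] at hε2
      linarith
    have h1 : ε * (m₀ - 7/8*m₀) ≤ r^2 := by nlinarith
    have h2 : Real.sqrt (ε * (m₀ - 7/8*m₀)) ≤ r := by
      calc Real.sqrt (ε * (m₀ - 7/8*m₀)) ≤ Real.sqrt (r^2) := Real.sqrt_le_sqrt h1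
        _ = r := Real.sqrt_sq hr0.le
    linarith
  -- penalty nonnegativity / Phi ≤ u - v
  have hpen : ∀ x y : EuclideanSpace ℝ (Fin n), ∀ t s : ℝ,
      t ∈ Set.Ico (0:ℝ) T → s ∈ Set.Ico (0:ℝ) T →
      Phi n u v T ε σ γ ζ x t y s ≤ u (x, t) - v (y, s) := by
    intro x y t s ht hs
    have h1 : 0 ≤ torusDist n (x - y - ζ)^2/(2*ε) := by
      have := torusDist_nonneg n (x - y - ζ); positivity
    have h2 : 0 ≤ |t - s|^2/(2*σ) := by positivity
    have h3 : (0:ℝ) < T - t := sub_pos.2 ht.2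
    have h4 : (0:ℝ) < T - s := sub_pos.2 hs.2
    have h5 : 0 ≤ γ/(T - t) := div_nonneg hγ0.le h3.le
    have h6 : 0 ≤ γ/(T - s) := div_nonneg hγ0.le h4.le
    simp only [Phi, Sfun]
    linarith
  -- value at test point
  have hTth : (0:ℝ) < T - th := sub_pos.2 hth.2
  have hPhitest : 15/16*m₀ < Phi n u v T ε σ γ ζ xh th xh th := by
    have hd : torusDist n (xh - xh - ζ) ≤ ‖ζ‖ := by
      have : xh - xh - ζ = -ζ := by module
      rw [this]
      simpa using torusDist_le_norm n (-ζ)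
    have hdsq : torusDist n (xh - xh - ζ)^2 / (2*ε) ≤ m₀/64 := by
      rw [div_le_iff₀ (by positivity)]
      nlinarith [torusDist_nonneg n (xh - xh - ζ), norm_nonneg ζ]
    have hγth : γ/(T - th) < m₀/64 := by
      rw [div_lt_iff₀ hTth]
      have : m₀/64*(T - th) = m₀*(T - th)/64 := by ring
      linarith
    have hSfun : Sfun T σ γ th th = γ/(T - th) + γ/(T - th) := by
      simp [Sfun]
    unfold Phi
    rw [hSfun]
    linarith
  have hthIco : th ∈ Set.Ico (0:ℝ) T := ⟨hth.1.le, hth.2⟩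
  -- bounded above Phi set
  have hPhibdd : BddAbove {r : ℝ | ∃ x y : EuclideanSpace ℝ (Fin n),
      ∃ t ∈ Set.Ico (0 : ℝ) T, ∃ s ∈ Set.Ico (0 : ℝ) T,
      r = Phi n u v T ε σ γ ζ x t y s} := by
    refine ⟨Cu + Cv, ?_⟩
    rintro _ ⟨x, y, t, ht, s, hs, rfl⟩
    have h1 := abs_le.1 (hCu x t ⟨ht.1, ht.2.le⟩)
    have h2 := abs_le.1 (hCv y s ⟨hs.1, hs.2.le⟩)
    have := hpen x y t s ht hs
    linarith [h1.2, h2.1]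
  constructor
  · calc 7/8*m₀ < 15/16*m₀ := by linarith
      _ < Phi n u v T ε σ γ ζ xh th xh th := hPhitest
      _ ≤ _ := le_csSup hPhibdd ⟨xh, xh, th, hthIco, th, hthIco, rfl⟩
  · intro x y t ht s hs hmax
    have hPhi : 15/16*m₀ < Phi n u v T ε σ γ ζ x t y s :=
      lt_of_lt_of_le hPhitest (hmax xh xh th hthIco th hthIco)
    have huvM : u (x, t) - v (y, s) ≤ M := by
      rw [hM]
      exact le_csSup hBbdd ⟨x, y, t, ⟨ht.1, ht.2.le⟩, s, ⟨hs.1, hs.2.le⟩, rfl⟩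
    have h3 : (0:ℝ) < T - t := sub_pos.2 ht.2
    have h4 : (0:ℝ) < T - s := sub_pos.2 hs.2
    have h5 : 0 ≤ γ/(T - t) := div_nonneg hγ0.le h3.le
    have h6 : 0 ≤ γ/(T - s) := div_nonneg hγ0.le h4.le
    have hd0 := torusDist_nonneg n (x - y - ζ)
    have hPhi' : u (x, t) - v (y, s) - torusDist n (x - y - ζ)^2/(2*ε)
        - (|t - s|^2/(2*σ) + γ/(T - t) + γ/(T - s)) = Phi n u v T ε σ γ ζ x t y s := rfl
    have hdM : torusDist n (x - y - ζ)^2 ≤ 2*M*ε := by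
      have h2 : 0 ≤ |t - s|^2/(2*σ) := by positivity
      have : torusDist n (x - y - ζ)^2/(2*ε) ≤ M := by
        rw [← hPhi'] at hPhi
        linarith
      rw [div_le_iff₀ (by positivity)] at this
      linarith
    have htsM : |t - s|^2 ≤ 2*M*σ := by
      have h1 : 0 ≤ torusDist n (x - y - ζ)^2/(2*ε) := by positivity
      have : |t - s|^2/(2*σ) ≤ M := by
        rw [← hPhi'] at hPhi
        linarith
      rw [div_le_iff₀ (by positivity)] at this
      linarith
    have hdle : torusDist n (x - y - ζ) ≤ Real.sqrt (2*M*ε) := by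
      calc torusDist n (x - y - ζ) = Real.sqrt (torusDist n (x - y - ζ)^2) :=
            (Real.sqrt_sq hd0).symm
        _ ≤ Real.sqrt (2*M*ε) := Real.sqrt_le_sqrt hdM
    have htsle : |t - s| ≤ Real.sqrt (2*M*σ) := by
      calc |t - s| = Real.sqrt (|t - s|^2) := (Real.sqrt_sq (abs_nonneg _)).symm
        _ ≤ Real.sqrt (2*M*σ) := Real.sqrt_le_sqrt htsM
    -- quantitative smallness
    have hsqrtσ : Real.sqrt (2*M*σ) ≤ r := by
      have : 2*M*σ ≤ r^2 := by
        rw [lt_div_iff₀ (by positivity)] at hσσ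
        linarith
      calc Real.sqrt (2*M*σ) ≤ Real.sqrt (r^2) := Real.sqrt_le_sqrt this
        _ = r := Real.sqrt_sq hr0.le
    have hsqrtε : Real.sqrt (2*M*ε) ≤ r/2 := by
      have h1 : 2*M*ε ≤ (r/2)^2 := by
        rw [lt_div_iff₀ (by positivity)] at hε1
        nlinarith
      calc Real.sqrt (2*M*ε) ≤ Real.sqrt ((r/2)^2) := Real.sqrt_le_sqrt h1
        _ = r/2 := Real.sqrt_sq (by linarith)
    have hdxy : torusDist n (x - y) ≤ r := by
      calc torusDist n (x - y) = torusDist n ((x - y - ζ) + ζ) := by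
            rw [sub_add_cancel]
        _ ≤ torusDist n (x - y - ζ) + ‖ζ‖ := torusDist_add_le n (x - y - ζ) ζ
        _ ≤ Real.sqrt (2*M*ε) + r/2 := add_le_add hdle hζhalf
        _ ≤ r := by linarith
    have hPhile := hpen x y t s ht hs
    have htpos : 0 < t := by
      by_contra ht0
      push_neg at ht0
      have ht00 : t = 0 := le_antisymm ht0 ht.1
      have hsr : s ≤ r := by
        have : |t - s| = s := by rw [ht00]; simp [abs_of_nonneg hs.1]
        linarith [htsle, hsqrtσ]
      have hsmall := hru x y t s ht.1 (by rw [ht00]; exact hr0.le) hs.1 hsr hdxy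
      linarith
    have hspos : 0 < s := by
      by_contra hs0
      push_neg at hs0
      have hs00 : s = 0 := le_antisymm hs0 hs.1
      have htr : t ≤ r := by
        have : |t - s| = t := by rw [hs00]; simp [abs_of_nonneg ht.1]
        linarith [htsle, hsqrtσ]
      have hsmall := hru x y t s ht.1 htr hs.1 (by rw [hs00]; exact hr0.le) hdxy
      linarith
    exact ⟨htpos, hspos, htsle, hdle⟩
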